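/- arXiv:2202.10162 — 4 statements merged into one kernel-verified Lean document; each statement's English description precedes it below -/
import Mathlib

section
/- Let T be Birnbaum-Saunders distributed with unit scale and shape φ > 0, and let μ > 0, y ∈ ℕ. Then ∫₀^∞ e^{−μ t} t^y f(t) dt = (e^{1/φ²}/(√(2π)φ)) · [ K_{y+1/2}(√(1+2φ²μ)/φ²) / (1+2φ²μ)^{(y+1/2)/2} + K_{y−1/2}(√(1+2φ²μ)/φ²) / (1+2φ²μ)^{(y−1/2)/2} ], where f is the BS density and K_λ the modified Bessel function of the third kind. -/
open MeasureTheory Real Set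

noncomputable def besselK (l ω : ℝ) : ℝ :=
  (1/2) * ∫ u in Ioi (0:ℝ), u ^ (l - 1) * Real.exp (-(ω/2) * (u + 1/u))

noncomputable def bsDensity (φ t : ℝ) : ℝ :=
  (t ^ (-(1:ℝ)/2) + t ^ (-(3:ℝ)/2)) / (2 * Real.sqrt (2*π) * φ) *
    Real.exp (-(t + 1/t - 2) / (2*φ^2))

lemma exp_neg_le_aux {x : ℝ} (hx : 0 < x) : Real.exp (-x) ≤ 4 / x^2 := by
  have h1 : x/2 ≤ Real.exp (x/2) := by
    have := Real.add_one_le_exp (x/2); linarith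
  have h2 : (x/2)^2 ≤ Real.exp (x/2)^2 := by
    apply pow_le_pow_left₀ (by positivity) h1 2
  have h3 : Real.exp (x/2)^2 = Real.exp x := by
    rw [sq, ← Real.exp_add]; ring_nf
  have h4 : x^2/4 ≤ Real.exp x := by
    rw [← h3]; calc x^2/4 = (x/2)^2 := by ring
      _ ≤ _ := h2
  rw [Real.exp_neg]
  have hx2 : 0 < x^2/4 := by positivity
  calc (Real.exp x)⁻¹ ≤ (x^2/4)⁻¹ := by
        apply inv_anti₀ hx2 h4
    _ = 4/x^2 := by field_simp
  
lemma integrable_aux (l a φ : ℝ) (ha : 0 < a) (hφ : 0 < φ) (hl : -1 ≤ l) :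
    IntegrableOn (fun t : ℝ => t ^ (l - 1) * Real.exp (-((a * t + 1/t) / (2*φ^2)))) (Ioi 0) := by
  have hφ2 : 0 < φ^2 := by positivity
  set d : ℝ := 1/(2*φ^2) with hdd
  have hd : 0 < d := by positivity
  set c : ℝ := a/(2*φ^2) with hcc
  have hc : 0 < c := by positivity
  have hmeas : Measurable (fun t : ℝ => t ^ (l - 1) * Real.exp (-((a * t + 1/t) / (2*φ^2)))) := by
    fun_prop
  have h01 : IntegrableOn (fun t : ℝ => t ^ (l - 1) * Real.exp (-((a * t + 1/t) / (2*φ^2))))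
      (Ioc 0 1) := by
    apply Measure.integrableOn_of_bounded (M := 4/d^2) measure_Ioc_lt_top.ne
      hmeas.aestronglyMeasurable
    rw [ae_restrict_iff' measurableSet_Ioc]
    filter_upwards with t ht
    obtain ⟨ht0, ht1⟩ := ht
    have hXd : d/t ≤ (a*t + 1/t)/(2*φ^2) := by
      have h0 : d / t = (1/t)/(2*φ^2) := by rw [hdd]; ring
      rw [h0]
      gcongr
      · exact le_add_of_nonneg_left (by positivity)
    have h1 : Real.exp (-((a*t+1/t)/(2*φ^2))) ≤ Real.exp (-(d/t)) :=
      Real.exp_le_exp.mpr (by linarith)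
    have h2 : Real.exp (-(d/t)) ≤ 4/(d/t)^2 := exp_neg_le_aux (by positivity)
    have h3 : 4/(d/t)^2 = 4*t^2/d^2 := by
      field_simp
    rw [Real.norm_eq_abs,
      abs_of_nonneg (mul_nonneg (Real.rpow_nonneg ht0.le _) (Real.exp_nonneg _))]
    calc t^(l-1) * Real.exp (-((a*t+1/t)/(2*φ^2)))
        ≤ t^(l-1) * (4*t^2/d^2) := by
          apply mul_le_mul_of_nonneg_left _ (Real.rpow_nonneg ht0.le _)
          rw [← h3]; exact h1.trans h2
      _ = 4/d^2 * t^(l+1) := by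
          have hpow2 : t^(l-1) * t^(2:ℕ) = t^(l+1) := by
            rw [← Real.rpow_natCast t 2, ← Real.rpow_add ht0]
            congr 1; push_cast; ring
          rw [← hpow2]; ring
      _ ≤ 4/d^2 * 1 := by
          gcongr
          exact Real.rpow_le_one ht0.le ht1 (by linarith)
      _ = 4/d^2 := by ring
  have h1i : IntegrableOn (fun t : ℝ => t ^ (l - 1) * Real.exp (-((a * t + 1/t) / (2*φ^2))))
      (Ioi 1) := by
    have hmaj : IntegrableOn (fun t : ℝ => t^(l+1) * Real.exp (-c * t^(1:ℝ))) (Ioi 1) :=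
      (integrableOn_rpow_mul_exp_neg_mul_rpow (by linarith) zero_lt_one hc).mono_set
        (Ioi_subset_Ioi zero_le_one)
    apply Integrable.mono' hmaj hmeas.aestronglyMeasurable
    rw [ae_restrict_iff' measurableSet_Ioi]
    filter_upwards with t ht
    have ht1 : 1 < t := ht
    have ht0 : 0 < t := lt_trans zero_lt_one ht1
    rw [Real.norm_eq_abs,
      abs_of_nonneg (mul_nonneg (Real.rpow_nonneg ht0.le _) (Real.exp_nonneg _))]
    have hct : -((a*t+1/t)/(2*φ^2)) ≤ -c * t^(1:ℝ) := by
      rw [Real.rpow_one]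
      have h0 : c * t = (a*t)/(2*φ^2) := by rw [hcc]; ring
      have : c * t ≤ (a*t+1/t)/(2*φ^2) := by
        rw [h0]; gcongr; exact le_add_of_nonneg_right (by positivity)
      linarith
    apply mul_le_mul
    · exact Real.rpow_le_rpow_of_exponent_le ht1.le (by linarith)
    · exact Real.exp_le_exp.mpr hct
    · exact Real.exp_nonneg _
    · exact Real.rpow_nonneg ht0.le _
  have hsplit : Ioi (0:ℝ) = Ioc 0 1 ∪ Ioi 1 := (Ioc_union_Ioi_eq_Ioi zero_le_one).symm
  rw [hsplit]
  exact h01.union h1i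

lemma besselK_sub (l a φ : ℝ) (ha : 0 < a) (hφ : 0 < φ) :
    besselK l (Real.sqrt a / φ^2)
      = Real.sqrt a ^ l / 2 *
        ∫ t in Ioi (0:ℝ), t ^ (l - 1) * Real.exp (-((a * t + 1/t) / (2*φ^2))) := by
  have hs : 0 < Real.sqrt a := Real.sqrt_pos.mpr ha
  set s := Real.sqrt a with hsdef
  have hs2 : s^2 = a := Real.sq_sqrt ha.le
  have hφ2 : (0:ℝ) < φ^2 := by positivity
  rw [besselK]
  have hmul : s * s ^ (l-1) = s ^ l := by
    nth_rewrite 1 [← Real.rpow_one s]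
    rw [← Real.rpow_add hs]; norm_num
  have hcmp := integral_comp_mul_left_Ioi
    (fun u : ℝ => u ^ (l-1) * Real.exp (-(s/φ^2/2) * (u + 1/u))) 0 hs
  simp only [mul_zero] at hcmp
  have hkey : ∀ t ∈ Ioi (0:ℝ),
      (fun x : ℝ => (s * x) ^ (l-1) * Real.exp (-(s/φ^2/2) * (s * x + 1/(s * x)))) t
        = s ^ (l-1) * (t ^ (l-1) * Real.exp (-((a * t + 1/t) / (2*φ^2)))) := by
    intro t ht
    have ht0 : 0 < t := ht
    simp only
    rw [Real.mul_rpow hs.le ht0.le]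
    have hexp : -(s/φ^2/2) * (s*t + 1/(s*t)) = -((a * t + 1/t) / (2*φ^2)) := by
      rw [← hs2]
      field_simp
    rw [hexp]; ring
  rw [setIntegral_congr_fun measurableSet_Ioi hkey, integral_const_mul, smul_eq_mul] at hcmp
  have hJ : (∫ u in Ioi (0:ℝ), u ^ (l-1) * Real.exp (-(s/φ^2/2) * (u + 1/u)))
      = s ^ l * ∫ t in Ioi (0:ℝ), t ^ (l-1) * Real.exp (-((a * t + 1/t) / (2*φ^2))) := by
    rw [← hmul]
    rw [mul_assoc s, hcmp, ← mul_assoc, mul_inv_cancel₀ hs.ne', one_mul]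
  rw [hJ]; ring

theorem bs_laplace_type_integral (φ μ : ℝ) (hφ : 0 < φ) (hμ : 0 < μ) (y : ℕ) :
    ∫ t in Ioi (0:ℝ), Real.exp (-μ * t) * t ^ y * bsDensity φ t
      = Real.exp (1/φ^2) / (Real.sqrt (2*π) * φ) *
        (besselK ((y:ℝ) + 1/2) (Real.sqrt (1 + 2*φ^2*μ) / φ^2) /
            (1 + 2*φ^2*μ) ^ (((y:ℝ) + 1/2)/2)
         + besselK ((y:ℝ) - 1/2) (Real.sqrt (1 + 2*φ^2*μ) / φ^2) /
            (1 + 2*φ^2*μ) ^ (((y:ℝ) - 1/2)/2)) := by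
  have hφ2 : (0:ℝ) < φ^2 := by positivity
  set a : ℝ := 1 + 2*φ^2*μ with hadef
  have ha : 0 < a := by rw [hadef]; positivity
  set l1 : ℝ := (y:ℝ) + 1/2 with hl1def
  set l2 : ℝ := (y:ℝ) - 1/2 with hl2def
  have hy0 : (0:ℝ) ≤ (y:ℝ) := Nat.cast_nonneg y
  have hint1 := integrable_aux l1 a φ ha hφ (by rw [hl1def]; linarith)
  have hint2 := integrable_aux l2 a φ ha hφ (by rw [hl2def]; linarith)
  have hcongr : ∀ t ∈ Ioi (0:ℝ),
      Real.exp (-μ*t) * t^y * bsDensity φ t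
        = Real.exp (1/φ^2) / (2*Real.sqrt (2*π)*φ) *
          (t ^ (l1-1) * Real.exp (-((a*t+1/t)/(2*φ^2)))
           + t ^ (l2-1) * Real.exp (-((a*t+1/t)/(2*φ^2)))) := by
    intro t ht
    have ht0 : 0 < t := ht
    rw [bsDensity]
    have hexp : Real.exp (-μ*t) * Real.exp (-(t + 1/t - 2)/(2*φ^2))
        = Real.exp (1/φ^2) * Real.exp (-((a*t+1/t)/(2*φ^2))) := by
      rw [← Real.exp_add, ← Real.exp_add]
      congr 1
      rw [hadef]
      field_simp
      ring
    have hp1 : (t:ℝ)^y * t^(-(1:ℝ)/2) = t^(l1-1) := by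
      rw [← Real.rpow_natCast t y, ← Real.rpow_add ht0, hl1def]
      congr 1; ring
    have hp2 : (t:ℝ)^y * t^(-(3:ℝ)/2) = t^(l2-1) := by
      rw [← Real.rpow_natCast t y, ← Real.rpow_add ht0, hl2def]
      congr 1; ring
    calc Real.exp (-μ*t) * t^y *
          ((t ^ (-(1:ℝ)/2) + t ^ (-(3:ℝ)/2)) / (2 * Real.sqrt (2*π) * φ) *
            Real.exp (-(t + 1/t - 2) / (2*φ^2)))
        = ((t:ℝ)^y * t^(-(1:ℝ)/2) + (t:ℝ)^y * t^(-(3:ℝ)/2)) / (2*Real.sqrt (2*π)*φ) *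
            (Real.exp (-μ*t) * Real.exp (-(t+1/t-2)/(2*φ^2))) := by ring
      _ = _ := by rw [hp1, hp2, hexp]; ring
  rw [setIntegral_congr_fun measurableSet_Ioi hcongr, integral_const_mul,
    integral_add hint1 hint2]
  rw [besselK_sub l1 a φ ha hφ, besselK_sub l2 a φ ha hφ]
  have hpow : ∀ l : ℝ, a ^ (l/2) = Real.sqrt a ^ l := by
    intro l
    rw [Real.sqrt_eq_rpow, ← Real.rpow_mul ha.le]
    congr 1; ring
  rw [hpow l1, hpow l2]
  have hs1 : (0:ℝ) < Real.sqrt a ^ l1 := Real.rpow_pos_of_pos (Real.sqrt_pos.mpr ha) _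
  have hs2 : (0:ℝ) < Real.sqrt a ^ l2 := Real.rpow_pos_of_pos (Real.sqrt_pos.mpr ha) _
  have hsq : (0:ℝ) < Real.sqrt (2*π) := Real.sqrt_pos.mpr (by positivity)
  field_simp
end

section
/- In the CPBS model, the joint probability function of the counts Y_{k1},…,Y_{kn_k} in cluster k is p(y_{k1},…,y_{kn_k}) = (e^{1/φ²}/(√(2π)φ)) · (∏_{j=1}^{n_k} μ_{kj}^{y_{kj}}/y_{kj}!) · [ K_{y_k+1/2}(√(1+2φ²μ_k)/φ²)/(1+2φ²μ_k)^{(y_k+1/2)/2} + K_{y_k−1/2}(√(1+2φ²μ_k)/φ²)/(1+2φ²μ_k)^{(y_k−1/2)/2} ], where y_k = Σ_j y_{kj} and μ_k = Σ_j μ_{kj}. -/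
open MeasureTheory Real Set

lemma cpbs_integ_aux {l p q : ℝ} (hp : 0 < p) (hq : 0 < q) :
    IntegrableOn (fun t : ℝ => t ^ l * Real.exp (-(p*t + q/t))) (Ioi (0:ℝ)) := by
  have hcont : ContinuousOn (fun t : ℝ => t ^ l * Real.exp (-(p*t + q/t))) (Ioi 0) := by
    apply ContinuousOn.mul
    · exact ContinuousOn.rpow_const continuousOn_id (fun x hx => Or.inl (ne_of_gt hx))
    · apply Continuous.comp_continuousOn Real.continuous_exp
      apply ContinuousOn.neg
      exact ContinuousOn.add (Continuous.continuousOn (by continuity))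
        (ContinuousOn.div continuousOn_const continuousOn_id (fun x hx => ne_of_gt hx))
  have hmeas : ∀ s : Set ℝ, MeasurableSet s → s ⊆ Ioi 0 →
      AEStronglyMeasurable (fun t : ℝ => t ^ l * Real.exp (-(p*t + q/t)))
        (volume.restrict s) := fun s hs hsub =>
    (hcont.mono hsub).aestronglyMeasurable hs
  rw [← Ioc_union_Ioi_eq_Ioi (le_of_lt one_pos)]
  apply IntegrableOn.union
  · set k : ℕ := ⌈-l⌉₊ + 1 with hk
    have hkpos : (0:ℝ) < k := by positivity
    have hbound : ∀ t ∈ Ioc (0:ℝ) 1, ‖t ^ l * Real.exp (-(p*t + q/t))‖ ≤ ((k:ℝ)/q)^k := by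
      intro t ht
      obtain ⟨ht0, ht1⟩ := ht
      have h1 : ‖t ^ l * Real.exp (-(p*t + q/t))‖ = t ^ l * Real.exp (-(p*t + q/t)) := by
        rw [norm_of_nonneg]; positivity
      rw [h1]
      have h2 : t ^ l ≤ t ^ (-(k:ℝ)) := by
        apply Real.rpow_le_rpow_of_exponent_ge ht0 ht1
        have := Nat.le_ceil (-l)
        push_cast [hk]; linarith
      have h3 : Real.exp (-(p*t+q/t)) ≤ Real.exp (-(q/t)) := by
        apply Real.exp_le_exp.mpr; nlinarith
      have h4 : t ^ (-(k:ℝ)) = (t⁻¹)^k := by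
        rw [Real.rpow_neg ht0.le, Real.rpow_natCast, ← inv_pow]
      have h5 : (t⁻¹)^k ≤ ((k:ℝ)/q)^k * Real.exp (q/t) := by
        have he : t⁻¹ ≤ ((k:ℝ)/q) * Real.exp (q/(t*k)) := by
          have := Real.add_one_le_exp (q/(t*k))
          have h0 : (0:ℝ) < q/(t*k) := by positivity
          calc t⁻¹ = ((k:ℝ)/q) * (q/(t*k)) := by field_simp
            _ ≤ ((k:ℝ)/q) * Real.exp (q/(t*k)) := by
                apply mul_le_mul_of_nonneg_left _ (by positivity); linarith
        calc (t⁻¹)^k ≤ (((k:ℝ)/q) * Real.exp (q/(t*k)))^k :=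
              pow_le_pow_left₀ (by positivity) he k
          _ = ((k:ℝ)/q)^k * Real.exp (q/(t*k))^k := mul_pow _ _ _
          _ = ((k:ℝ)/q)^k * Real.exp (q/t) := by
              rw [← Real.exp_nat_mul]
              congr 1
              field_simp
      calc t ^ l * Real.exp (-(p*t + q/t)) ≤ t ^ (-(k:ℝ)) * Real.exp (-(q/t)) := by
            apply mul_le_mul h2 h3 (Real.exp_pos _).le (Real.rpow_nonneg ht0.le _)
        _ = (t⁻¹)^k * Real.exp (-(q/t)) := by rw [h4]
        _ ≤ ((k:ℝ)/q)^k * Real.exp (q/t) * Real.exp (-(q/t)) := by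
            apply mul_le_mul_of_nonneg_right h5 (Real.exp_pos _).le
        _ = ((k:ℝ)/q)^k := by rw [mul_assoc, ← Real.exp_add]; simp
    exact Integrable.mono' ((integrableOn_const_iff).mpr (Or.inr measure_Ioc_lt_top))
      (hmeas _ measurableSet_Ioc (Ioc_subset_Ioi_self))
      ((ae_restrict_iff' measurableSet_Ioc).mpr (Filter.Eventually.of_forall hbound))
  · set s : ℝ := max l 0 with hs
    have hint : IntegrableOn (fun x : ℝ => x ^ s * Real.exp (-p * x)) (Ioi 1) := by
      have := integrableOn_rpow_mul_exp_neg_mul_rpow (p := 1) (s := s) (b := p)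
        (lt_of_lt_of_le (by norm_num) (le_max_right l 0)) one_pos hp
      simp only [Real.rpow_one] at this
      exact this.mono_set (Ioi_subset_Ioi (by norm_num))
    apply Integrable.mono' hint (hmeas _ measurableSet_Ioi (Ioi_subset_Ioi (by norm_num)))
    rw [ae_restrict_iff' measurableSet_Ioi]
    apply Filter.Eventually.of_forall
    intro t ht
    have ht1 : (1:ℝ) ≤ t := le_of_lt ht
    have ht0 : (0:ℝ) < t := lt_of_lt_of_le one_pos ht1
    rw [norm_of_nonneg (by positivity)]
    apply mul_le_mul (Real.rpow_le_rpow_of_exponent_le ht1 (le_max_left _ _))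
      (Real.exp_le_exp.mpr (by nlinarith [div_nonneg hq.le ht0.le])) (Real.exp_pos _).le
      (Real.rpow_nonneg ht0.le _)

lemma cpbs_sub_aux (l ω : ℝ) {s : ℝ} (hs : 0 < s) :
    ∫ t in Ioi (0:ℝ), t ^ (l-1) * Real.exp (-(ω/2) * (t/s + s/t))
      = s ^ l * (2 * besselK l ω) := by
  have h := integral_comp_mul_left_Ioi
    (fun u => u ^ (l-1) * Real.exp (-(ω/2) * (u + 1/u))) 0 (inv_pos.mpr hs)
  simp only [mul_zero, inv_inv, smul_eq_mul] at h
  have key : ∫ t in Ioi (0:ℝ), t ^ (l-1) * Real.exp (-(ω/2) * (t/s + s/t))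
      = ∫ t in Ioi (0:ℝ), s ^ (l-1) *
          ((s⁻¹ * t) ^ (l-1) * Real.exp (-(ω/2) * ((s⁻¹*t) + 1/(s⁻¹*t)))) := by
    apply setIntegral_congr_fun measurableSet_Ioi
    intro t ht
    have ht0 : (0:ℝ) < t := ht
    have h1 : s ^ (l-1) * (s⁻¹ * t) ^ (l-1) = t ^ (l-1) := by
      rw [← Real.mul_rpow hs.le (by positivity)]
      rw [show s * (s⁻¹ * t) = t by field_simp]
    have h2 : s⁻¹ * t + 1/(s⁻¹*t) = t/s + s/t := by field_simp
    dsimp only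
    rw [← mul_assoc, h1, h2]
  rw [key, integral_const_mul, h, besselK]
  have hsl : s ^ l = s ^ (l-1) * s := by
    rw [← Real.rpow_add_one hs.ne']; ring_nf
  rw [hsl]; ring

theorem cpbs_joint_pmf (φ : ℝ) (hφ : 0 < φ) (n : ℕ) (μ : Fin n → ℝ)
    (hμ : ∀ j, 0 < μ j) (y : Fin n → ℕ) :
    (∫ t in Ioi (0:ℝ),
        (∏ j, Real.exp (-(μ j) * t) * (μ j * t) ^ (y j) / (Nat.factorial (y j) : ℝ)) *
          bsDensity φ t)
      = Real.exp (1/φ^2) / (Real.sqrt (2*π) * φ) *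
        (∏ j, (μ j) ^ (y j) / (Nat.factorial (y j) : ℝ)) *
        (besselK ((∑ j, (y j : ℝ)) + 1/2)
            (Real.sqrt (1 + 2*φ^2*(∑ j, μ j)) / φ^2) /
            (1 + 2*φ^2*(∑ j, μ j)) ^ (((∑ j, (y j : ℝ)) + 1/2)/2)
         + besselK ((∑ j, (y j : ℝ)) - 1/2)
            (Real.sqrt (1 + 2*φ^2*(∑ j, μ j)) / φ^2) /
            (1 + 2*φ^2*(∑ j, μ j)) ^ (((∑ j, (y j : ℝ)) - 1/2)/2)) := by
  set μS : ℝ := ∑ j, μ j with hμS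
  set Y : ℝ := ∑ j, (y j : ℝ) with hY
  have hμS0 : 0 ≤ μS := Finset.sum_nonneg (fun j _ => (hμ j).le)
  have hb : (0:ℝ) < 1 + 2*φ^2*μS := by positivity
  set r : ℝ := Real.sqrt (1 + 2*φ^2*μS) with hrdef
  have hr : 0 < r := Real.sqrt_pos.mpr hb
  have hr2 : r^2 = 1 + 2*φ^2*μS := Real.sq_sqrt hb.le
  set ω : ℝ := r / φ^2 with hωdef
  have hω : 0 < ω := by positivity
  set s : ℝ := r⁻¹ with hsdef
  have hs : 0 < s := by positivity
  set P : ℝ := ∏ j, (μ j) ^ (y j) / (Nat.factorial (y j) : ℝ) with hP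
  set C : ℝ := P * (Real.exp (1/φ^2) / (2 * Real.sqrt (2*π) * φ)) with hC
  -- pointwise identity
  have key : ∀ t ∈ Ioi (0:ℝ),
      (∏ j, Real.exp (-(μ j) * t) * (μ j * t) ^ (y j) / (Nat.factorial (y j) : ℝ)) *
          bsDensity φ t
        = C * (t ^ ((Y + 1/2) - 1) * Real.exp (-(ω/2) * (t/s + s/t))
             + t ^ ((Y - 1/2) - 1) * Real.exp (-(ω/2) * (t/s + s/t))) := by
    intro t ht
    have ht0 : (0:ℝ) < t := ht
    have hprod : (∏ j, Real.exp (-(μ j) * t) * (μ j * t) ^ (y j) / (Nat.factorial (y j) : ℝ))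
        = P * (Real.exp (-(μS * t)) * t ^ (∑ j, y j)) := by
      calc (∏ j, Real.exp (-(μ j) * t) * (μ j * t) ^ (y j) / (Nat.factorial (y j) : ℝ))
          = ∏ j, ((μ j) ^ (y j) / (Nat.factorial (y j):ℝ)) *
              (Real.exp (-(μ j)*t) * t ^ (y j)) := by
            apply Finset.prod_congr rfl; intro j _; rw [mul_pow]; ring
        _ = P * ((∏ j, Real.exp (-(μ j)*t)) * ∏ j, t ^ (y j)) := by
            rw [Finset.prod_mul_distrib, Finset.prod_mul_distrib, hP]
        _ = P * (Real.exp (-(μS*t)) * t ^ (∑ j, y j)) := by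
            rw [Finset.prod_pow_eq_pow_sum, ← Real.exp_sum]
            rw [hμS, Finset.sum_mul, ← Finset.sum_neg_distrib]
            simp [neg_mul]
    have hexp : Real.exp (-(μS*t)) * Real.exp (-(t+1/t-2)/(2*φ^2))
        = Real.exp (1/φ^2) * Real.exp (-(ω/2)*(t/s+s/t)) := by
      rw [← Real.exp_add, ← Real.exp_add]
      congr 1
      rw [hωdef, hsdef]
      field_simp
      linear_combination (t^2) * hr2
    have hpow : (t:ℝ) ^ (∑ j, y j) * (t ^ (-(1:ℝ)/2) + t ^ (-(3:ℝ)/2))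
        = t ^ ((Y + 1/2) - 1) + t ^ ((Y - 1/2) - 1) := by
      have h1 : (t:ℝ) ^ (∑ j, y j) = t ^ (Y:ℝ) := by
        rw [hY, ← Real.rpow_natCast t (∑ j, y j)]
        push_cast
        rfl
      rw [h1, mul_add, ← Real.rpow_add ht0, ← Real.rpow_add ht0]
      norm_num
      ring_nf
    rw [hprod, bsDensity]
    rw [show P * (Real.exp (-(μS * t)) * t ^ (∑ j, y j)) *
        ((t ^ (-(1:ℝ)/2) + t ^ (-(3:ℝ)/2)) / (2 * Real.sqrt (2*π) * φ) *
          Real.exp (-(t + 1/t - 2) / (2*φ^2)))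
        = P * (t ^ (∑ j, y j) * (t ^ (-(1:ℝ)/2) + t ^ (-(3:ℝ)/2))) / (2 * Real.sqrt (2*π) * φ) *
          (Real.exp (-(μS*t)) * Real.exp (-(t+1/t-2)/(2*φ^2))) by ring]
    rw [hpow, hexp, hC]
    ring
  rw [setIntegral_congr_fun measurableSet_Ioi key, integral_const_mul]
  have hintf : ∀ l : ℝ, IntegrableOn
      (fun t : ℝ => t ^ l * Real.exp (-(ω/2) * (t/s + s/t))) (Ioi (0:ℝ)) := by
    intro l
    have h := cpbs_integ_aux (l := l) (p := ω/(2*s)) (q := ω*s/2)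
      (by positivity) (by positivity)
    apply h.congr_fun _ measurableSet_Ioi
    intro t ht
    have ht0 : (0:ℝ) < t := ht
    dsimp only
    rw [show -(ω/(2*s)*t + ω*s/2/t) = -(ω/2)*(t/s+s/t) from by field_simp]
  rw [integral_add (hintf _) (hintf _)]
  rw [cpbs_sub_aux (Y + 1/2) ω hs, cpbs_sub_aux (Y - 1/2) ω hs]
  have hsl : ∀ l : ℝ, s ^ l = ((1 + 2*φ^2*μS) ^ (l/2))⁻¹ := by
    intro l
    rw [hsdef, Real.inv_rpow hr.le, hrdef, Real.sqrt_eq_rpow,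
      ← Real.rpow_mul hb.le]
    ring_nf
  rw [hsl, hsl, hC]
  have h1 : (0:ℝ) < (1 + 2*φ^2*μS) ^ ((Y + 1/2)/2) := Real.rpow_pos_of_pos hb _
  have h2 : (0:ℝ) < (1 + 2*φ^2*μS) ^ ((Y - 1/2)/2) := Real.rpow_pos_of_pos hb _
  have hsq : (0:ℝ) < Real.sqrt (2*π) := Real.sqrt_pos.mpr (by positivity)
  field_simp
end

section
/- In the CPBS model, the conditional s-th moment of the latent effect satisfies E[T_k^s | Y_{k1}=y_{k1},…,Y_{kn_k}=y_{kn_k}] = [1/p(y_{k1},…,y_{kn_k})] · (e^{1/φ²}/(√(2π)φ)) · (∏_j μ_{kj}^{y_{kj}}/y_{kj}!) · [ K_{y_k+1/2+s}(√(1+2φ²μ_k)/φ²)/(1+2φ²μ_k)^{(y_k+1/2+s)/2} + K_{y_k−1/2+s}(√(1+2φ²μ_k)/φ²)/(1+2φ²μ_k)^{(y_k−1/2+s)/2} ], for any s ∈ ℝ. -/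
open MeasureTheory Real Set

lemma cpbs_integrable_aux (l b c : ℝ) (hb : 0 < b) (hc : 0 < c) :
    IntegrableOn (fun t : ℝ => t ^ (l-1) * Real.exp (-(b*t + c/t))) (Ioi 0) := by
  obtain ⟨n, hn⟩ := exists_nat_gt (-l)
  have hmeas : AEStronglyMeasurable (fun t : ℝ => t ^ (l-1) * Real.exp (-(b*t + c/t)))
      (volume.restrict (Ioi 0)) := by
    refine ContinuousOn.aestronglyMeasurable ?_ measurableSet_Ioi
    refine (continuousOn_id.rpow_const (fun x hx => Or.inl (ne_of_gt hx))).mul ?_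
    exact Real.continuous_exp.comp_continuousOn
      (((continuous_const.mul continuous_id).continuousOn.add
        (continuousOn_const.div continuousOn_id (fun x hx => ne_of_gt hx))).neg)
  have hint : IntegrableOn (fun t : ℝ =>
      ((n.factorial : ℝ)/c^n) * (t ^ (l-1+n) * Real.exp (-b * t))) (Ioi 0) := by
    refine (Integrable.const_mul ?_ _)
    have := integrableOn_rpow_mul_exp_neg_mul_rpow (p := 1) (s := l-1+n) (b := b)
      (by linarith) zero_lt_one hb
    refine this.congr_fun (fun t ht => by beta_reduce; rw [Real.rpow_one]) measurableSet_Ioi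
  refine Integrable.mono' hint hmeas ?_
  filter_upwards [ae_restrict_mem measurableSet_Ioi] with t ht
  have ht : (0:ℝ) < t := ht
  rw [Real.norm_eq_abs, abs_of_nonneg (by positivity)]
  have key : Real.exp (-(c/t)) ≤ ((n.factorial : ℝ)/c^n) * t^(n:ℕ) := by
    have h1 : (c/t)^n / n.factorial ≤ Real.exp (c/t) :=
      Real.pow_div_factorial_le_exp (x := c/t) (by positivity) n
    have h2 : (0:ℝ) < (c/t)^n / n.factorial := by positivity
    rw [Real.exp_neg]
    calc (Real.exp (c/t))⁻¹ ≤ ((c/t)^n / n.factorial)⁻¹ := by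
          exact inv_anti₀ h2 h1
      _ = ((n.factorial : ℝ)/c^n) * t^(n:ℕ) := by
          rw [div_pow]; field_simp
  calc t ^ (l-1) * Real.exp (-(b*t + c/t))
      = (t ^ (l-1) * Real.exp (-(c/t))) * Real.exp (-b*t) := by
        rw [mul_assoc, ← Real.exp_add]; ring_nf
    _ ≤ (t ^ (l-1) * (((n.factorial : ℝ)/c^n) * t^(n:ℕ))) * Real.exp (-b*t) := by
        refine mul_le_mul_of_nonneg_right (mul_le_mul_of_nonneg_left key (by positivity))
          (Real.exp_pos _).le
    _ = ((n.factorial : ℝ)/c^n) * (t ^ (l-1+n) * Real.exp (-b * t)) := by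
        rw [Real.rpow_add ht, Real.rpow_natCast]; ring

lemma cpbs_besselK_integral (l b c : ℝ) (hb : 0 < b) (hc : 0 < c) :
    ∫ t in Ioi (0:ℝ), t ^ (l-1) * Real.exp (-(b*t + c/t))
      = 2 * (c/b) ^ (l/2) * besselK l (2 * Real.sqrt (b*c)) := by
  set r := Real.sqrt (c/b) with hrdef
  have hr : 0 < r := Real.sqrt_pos.mpr (by positivity)
  have hbr : b * r = Real.sqrt (b*c) := by
    rw [hrdef, ← Real.sqrt_sq hb.le, ← Real.sqrt_mul (by positivity)]
    congr 1; field_simp; rw [Real.sq_sqrt (sq_nonneg _)]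
  have hcr : c / r = Real.sqrt (b*c) := by
    rw [hrdef, ← Real.sqrt_sq hc.le, ← Real.sqrt_div (by positivity)]
    congr 1; field_simp; rw [Real.sq_sqrt (sq_nonneg _)]
  have hsub := integral_comp_mul_left_Ioi
    (fun t => t ^ (l-1) * Real.exp (-(b*t + c/t))) 0 hr
  rw [mul_zero] at hsub
  have heq : ∀ u ∈ Ioi (0:ℝ),
      (r*u) ^ (l-1) * Real.exp (-(b*(r*u) + c/(r*u)))
      = r ^ (l-1) * (u ^ (l-1) * Real.exp (-(2*Real.sqrt (b*c)/2) * (u + 1/u))) := by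
    intro u hu
    have hu : (0:ℝ) < u := hu
    rw [Real.mul_rpow hr.le hu.le]
    have he : -(b*(r*u) + c/(r*u)) = -(2*Real.sqrt (b*c)/2) * (u + 1/u) := by
      have : c/(r*u) = (c/r) * (1/u) := by field_simp
      rw [this, hcr]
      have : b*(r*u) = (b*r)*u := by ring
      rw [this, hbr]; ring
    rw [he]; ring
  rw [setIntegral_congr_fun measurableSet_Ioi heq] at hsub
  beta_reduce at hsub
  rw [integral_const_mul, smul_eq_mul] at hsub
  have : ∫ t in Ioi (0:ℝ), t ^ (l-1) * Real.exp (-(b*t + c/t))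
      = r * (r ^ (l-1) * ∫ u in Ioi (0:ℝ),
          u ^ (l-1) * Real.exp (-(2*Real.sqrt (b*c)/2) * (u + 1/u))) := by
    rw [hsub]; field_simp
  rw [this, besselK]
  have hx : (0:ℝ) < c/b := by positivity
  have h1 : r * r ^ (l-1) = r ^ l := by
    nth_rewrite 1 [← Real.rpow_one r]
    rw [← Real.rpow_add hr]; norm_num
  have h2 : r ^ l = (c/b) ^ (l/2) := by
    rw [hrdef, Real.sqrt_eq_rpow, ← Real.rpow_mul hx.le]
    congr 1; ring
  rw [← mul_assoc, h1.trans h2]; ring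

lemma cpbs_pointwise (φ : ℝ) (hφ : 0 < φ) (n : ℕ) (μ : Fin n → ℝ)
    (y : Fin n → ℕ) (s : ℝ) :
    ∀ t ∈ Ioi (0:ℝ),
      t ^ s *
        ((∏ j, Real.exp (-(μ j) * t) * (μ j * t) ^ (y j) / (Nat.factorial (y j) : ℝ)) *
          bsDensity φ t)
      = ((∏ j, (μ j) ^ (y j) / (Nat.factorial (y j) : ℝ)) * Real.exp (1/φ^2)
          / (2 * Real.sqrt (2*π) * φ)) *
        (t ^ (((∑ j, (y j : ℝ)) + 1/2 + s) - 1) *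
            Real.exp (-(((1 + 2*φ^2*(∑ j, μ j))/(2*φ^2))*t + (1/(2*φ^2))/t))
         + t ^ (((∑ j, (y j : ℝ)) - 1/2 + s) - 1) *
            Real.exp (-(((1 + 2*φ^2*(∑ j, μ j))/(2*φ^2))*t + (1/(2*φ^2))/t))) := by
  intro t ht
  have ht : (0:ℝ) < t := ht
  set M := ∑ j, μ j with hM
  set Y := ∑ j, (y j : ℝ) with hY
  have hprod : (∏ j, Real.exp (-(μ j) * t) * (μ j * t) ^ (y j) / (Nat.factorial (y j) : ℝ))
      = Real.exp (-(M * t)) * (t ^ Y * ∏ j, (μ j) ^ (y j) / (Nat.factorial (y j) : ℝ)) := by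
    have step : ∀ j ∈ Finset.univ,
        Real.exp (-(μ j) * t) * (μ j * t) ^ (y j) / (Nat.factorial (y j) : ℝ)
        = Real.exp (-(μ j) * t) * (t ^ (y j) * ((μ j) ^ (y j) / (Nat.factorial (y j) : ℝ))) :=
      fun j _ => by rw [mul_pow]; ring
    rw [Finset.prod_congr rfl step, Finset.prod_mul_distrib, Finset.prod_mul_distrib,
      ← Real.exp_sum, Finset.prod_pow_eq_pow_sum]
    have h1 : ∑ j, -(μ j) * t = -(M * t) := by
      rw [← Finset.sum_mul, hM, Finset.sum_neg_distrib, neg_mul]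
    have h2 : (t : ℝ) ^ (∑ j, y j) = t ^ Y := by
      rw [hY, ← Real.rpow_natCast t (∑ j, y j), Nat.cast_sum]
    rw [h1, h2]
  rw [hprod, bsDensity]
  have hexp : Real.exp (-(M * t)) * Real.exp (-(t + 1/t - 2) / (2*φ^2))
      = Real.exp (1/φ^2) * Real.exp (-(((1 + 2*φ^2*M)/(2*φ^2))*t + (1/(2*φ^2))/t)) := by
    rw [← Real.exp_add, ← Real.exp_add]
    congr 1
    field_simp
    ring
  have hpow : t ^ s * t ^ Y * (t ^ (-(1:ℝ)/2) + t ^ (-(3:ℝ)/2))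
      = t ^ ((Y + 1/2 + s) - 1) + t ^ ((Y - 1/2 + s) - 1) := by
    rw [← Real.rpow_add ht, mul_add, ← Real.rpow_add ht, ← Real.rpow_add ht]
    congr 1 <;> · congr 1; ring
  calc t ^ s * (Real.exp (-(M * t)) * (t ^ Y * ∏ j, (μ j) ^ (y j) / (Nat.factorial (y j) : ℝ)) *
        ((t ^ (-(1:ℝ)/2) + t ^ (-(3:ℝ)/2)) / (2 * Real.sqrt (2*π) * φ) *
          Real.exp (-(t + 1/t - 2) / (2*φ^2))))
      = (t ^ s * t ^ Y * (t ^ (-(1:ℝ)/2) + t ^ (-(3:ℝ)/2))) *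
          (Real.exp (-(M * t)) * Real.exp (-(t + 1/t - 2) / (2*φ^2))) *
          (∏ j, (μ j) ^ (y j) / (Nat.factorial (y j) : ℝ)) / (2 * Real.sqrt (2*π) * φ) := by
        ring
    _ = _ := by rw [hexp, hpow]; ring

theorem cpbs_conditional_moments (φ : ℝ) (hφ : 0 < φ) (n : ℕ) (μ : Fin n → ℝ)
    (hμ : ∀ j, 0 < μ j) (y : Fin n → ℕ) (s : ℝ) :
    (∫ t in Ioi (0:ℝ),
        t ^ s *
        ((∏ j, Real.exp (-(μ j) * t) * (μ j * t) ^ (y j) / (Nat.factorial (y j) : ℝ)) *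
          bsDensity φ t))
      / (∫ t in Ioi (0:ℝ),
          (∏ j, Real.exp (-(μ j) * t) * (μ j * t) ^ (y j) / (Nat.factorial (y j) : ℝ)) *
            bsDensity φ t)
    = (1 / ∫ t in Ioi (0:ℝ),
          (∏ j, Real.exp (-(μ j) * t) * (μ j * t) ^ (y j) / (Nat.factorial (y j) : ℝ)) *
            bsDensity φ t) *
      (Real.exp (1/φ^2) / (Real.sqrt (2*π) * φ)) *
      (∏ j, (μ j) ^ (y j) / (Nat.factorial (y j) : ℝ)) *
      (besselK ((∑ j, (y j : ℝ)) + 1/2 + s)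
          (Real.sqrt (1 + 2*φ^2*(∑ j, μ j)) / φ^2) /
          (1 + 2*φ^2*(∑ j, μ j)) ^ (((∑ j, (y j : ℝ)) + 1/2 + s)/2)
       + besselK ((∑ j, (y j : ℝ)) - 1/2 + s)
          (Real.sqrt (1 + 2*φ^2*(∑ j, μ j)) / φ^2) /
          (1 + 2*φ^2*(∑ j, μ j)) ^ (((∑ j, (y j : ℝ)) - 1/2 + s)/2)) := by
  have hM0 : (0:ℝ) ≤ ∑ j, μ j := Finset.sum_nonneg fun j _ => (hμ j).le
  set M := ∑ j, μ j with hM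
  set Y := ∑ j, (y j : ℝ) with hY
  have hD : (0:ℝ) < 1 + 2*φ^2*M := by nlinarith [sq_nonneg φ]
  set b := (1 + 2*φ^2*M)/(2*φ^2) with hb'
  set c := (1:ℝ)/(2*φ^2) with hc'
  have hb : 0 < b := by rw [hb']; positivity
  have hc : 0 < c := by rw [hc']; positivity
  have hNum : (∫ t in Ioi (0:ℝ),
        t ^ s *
        ((∏ j, Real.exp (-(μ j) * t) * (μ j * t) ^ (y j) / (Nat.factorial (y j) : ℝ)) *
          bsDensity φ t))
      = ((∏ j, (μ j) ^ (y j) / (Nat.factorial (y j) : ℝ)) * Real.exp (1/φ^2)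
          / (2 * Real.sqrt (2*π) * φ)) *
        ((2 * (c/b) ^ ((Y + 1/2 + s)/2) * besselK (Y + 1/2 + s) (2 * Real.sqrt (b*c)))
         + (2 * (c/b) ^ ((Y - 1/2 + s)/2) * besselK (Y - 1/2 + s) (2 * Real.sqrt (b*c)))) := by
    rw [setIntegral_congr_fun measurableSet_Ioi (cpbs_pointwise φ hφ n μ y s)]
    rw [integral_const_mul,
      integral_add (cpbs_integrable_aux (Y + 1/2 + s) b c hb hc)
        (cpbs_integrable_aux (Y - 1/2 + s) b c hb hc),
      cpbs_besselK_integral (Y + 1/2 + s) b c hb hc,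
      cpbs_besselK_integral (Y - 1/2 + s) b c hb hc]
  have hω : 2 * Real.sqrt (b*c) = Real.sqrt (1 + 2*φ^2*M) / φ^2 := by
    have : b * c = (1 + 2*φ^2*M) / (2*φ^2)^2 := by
      rw [hb', hc', div_mul_div_comm, mul_one, ← sq]
    rw [this, Real.sqrt_div hD.le, Real.sqrt_sq (by positivity)]
    field_simp
  have hcb : c / b = 1 / (1 + 2*φ^2*M) := by
    rw [hb', hc']
    rw [div_div_div_eq]
    field_simp
  have hpow1 : (c/b) ^ ((Y + 1/2 + s)/2) = 1 / (1 + 2*φ^2*M) ^ ((Y + 1/2 + s)/2) := by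
    rw [hcb, one_div, Real.inv_rpow hD.le]
    exact (one_div _).symm
  have hpow2 : (c/b) ^ ((Y - 1/2 + s)/2) = 1 / (1 + 2*φ^2*M) ^ ((Y - 1/2 + s)/2) := by
    rw [hcb, one_div, Real.inv_rpow hD.le]
    exact (one_div _).symm
  rw [hpow1, hpow2, hω] at hNum
  rw [hNum]
  ring
end

section
/- If Y|T ~ Poisson(μT) with T ~ BS(φ) unit scale, then the conditional (posterior) distribution of T given Y = y is a mixture of two generalized inverse Gaussian distributions with common parameters a = 2μ + φ^{−2}, b = φ^{−2} and orders y + 1/2 and y − 1/2 respectively, with mixture weights proportional to (b/a)^{(y+1/2)/2} K_{y+1/2}(√(ab)) and (b/a)^{(y−1/2)/2} K_{y−1/2}(√(ab)). -/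
open MeasureTheory Real Set

noncomputable def gigDensity (a b α z : ℝ) : ℝ :=
  (a/b) ^ (α/2) / (2 * besselK α (Real.sqrt (a*b))) * z ^ (α - 1) *
    Real.exp (-(a*z + b/z)/2)

lemma pow_div_fact_le_exp (x : ℝ) (hx : 0 ≤ x) (n : ℕ) : x ^ n / n.factorial ≤ Real.exp x := by
  refine le_trans ?_ (Real.sum_le_exp_of_nonneg hx (n+1))
  have := Finset.single_le_sum (f := fun i => x ^ i / i.factorial)
    (fun i _ => by positivity) (Finset.self_mem_range_succ n)
  simpa using this

lemma exp_neg_div_le (c u : ℝ) (hc : 0 < c) (hu : 0 < u) (n : ℕ) :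
    Real.exp (-(c / u)) ≤ n.factorial * (u / c) ^ n := by
  have h := pow_div_fact_le_exp (c / u) (by positivity) n
  rw [Real.exp_neg, inv_le_comm₀ (Real.exp_pos _) (by positivity)]
  refine le_trans (le_of_eq ?_) h
  rw [div_pow, div_pow, eq_div_iff (by positivity)]
  field_simp

lemma gig_integrable (l a b : ℝ) (ha : 0 < a) (hb : 0 < b) :
    IntegrableOn (fun u : ℝ => u ^ (l - 1) * Real.exp (-(a * u + b / u) / 2)) (Ioi 0) := by
  obtain ⟨n, hn⟩ : ∃ n : ℕ, -l < n := exists_nat_gt (-l)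
  have hmain : IntegrableOn
      (fun u : ℝ => (n.factorial * (2 / b) ^ n) * (u ^ (l - 1 + n) * Real.exp (-(a/2) * u)))
      (Ioi 0) := by
    refine Integrable.const_mul ?_ _
    have := integrableOn_rpow_mul_exp_neg_mul_rpow (p := 1) (s := l - 1 + n) (b := a/2)
      (by linarith) one_pos (by positivity)
    refine this.congr_fun (fun x hx => ?_) measurableSet_Ioi
    simp only [Real.rpow_one]
  refine Integrable.mono' hmain ?_ ?_
  · refine ContinuousOn.aestronglyMeasurable ?_ measurableSet_Ioi
    refine ContinuousOn.mul ?_ ?_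
    · exact continuousOn_id.rpow_const (fun x hx => Or.inl (ne_of_gt hx))
    · refine Real.continuous_exp.comp_continuousOn ?_
      refine ContinuousOn.div_const (ContinuousOn.neg ?_) 2
      exact (continuousOn_const.mul continuousOn_id).add
        (continuousOn_const.div continuousOn_id (fun x hx => ne_of_gt hx))
  · filter_upwards [ae_restrict_mem measurableSet_Ioi] with u hu
    have hu0 : (0:ℝ) < u := hu
    have h1 : Real.exp (-(a * u + b / u) / 2)
        = Real.exp (-(a/2) * u) * Real.exp (-((b/2) / u)) := by
      rw [← Real.exp_add]; congr 1; field_simp; ring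
    have h2 : Real.exp (-((b/2) / u)) ≤ n.factorial * (u / (b/2)) ^ n :=
      exp_neg_div_le _ _ (by positivity) hu0 n
    have h3 : ‖u ^ (l - 1) * Real.exp (-(a * u + b / u) / 2)‖
        = u ^ (l-1) * Real.exp (-(a/2)*u) * Real.exp (-((b/2)/u)) := by
      rw [norm_eq_abs, abs_of_nonneg (by positivity), h1, mul_assoc]
    rw [h3]
    have h4 : u ^ (l-1) * Real.exp (-(a/2)*u) * Real.exp (-((b/2)/u))
        ≤ u ^ (l-1) * Real.exp (-(a/2)*u) * (n.factorial * (u/(b/2))^n) := by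
      refine mul_le_mul_of_nonneg_left h2 (by positivity)
    refine h4.trans (le_of_eq ?_)
    have h5 : u ^ (l - 1 + n) = u ^ (l-1) * u ^ (n:ℕ) := by
      rw [← Real.rpow_natCast u n, ← Real.rpow_add hu0]
    rw [h5]
    rw [div_pow, div_pow]
    field_simp
    ring_nf
    rw [← mul_pow, mul_inv_cancel₀ hb.ne', one_pow, one_mul]

lemma besselK_integrand_eq (l ω : ℝ) (u : ℝ) :
    u ^ (l - 1) * Real.exp (-(ω/2) * (u + 1/u))
      = u ^ (l - 1) * Real.exp (-(ω * u + ω / u) / 2) := by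
  congr 2
  ring

lemma besselK_integrable (l ω : ℝ) (hω : 0 < ω) :
    IntegrableOn (fun u : ℝ => u ^ (l - 1) * Real.exp (-(ω/2) * (u + 1/u))) (Ioi 0) := by
  refine (gig_integrable l ω ω hω hω).congr_fun (fun u _ => ?_) measurableSet_Ioi
  exact (besselK_integrand_eq l ω u).symm

lemma besselK_pos (l ω : ℝ) (hω : 0 < ω) : 0 < besselK l ω := by
  rw [besselK]
  have hnn : 0 ≤ᵐ[volume.restrict (Ioi (0:ℝ))]
      fun u : ℝ => u ^ (l - 1) * Real.exp (-(ω/2) * (u + 1/u)) := by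
    filter_upwards [ae_restrict_mem measurableSet_Ioi] with u hu
    have hu0 : (0:ℝ) < u := hu
    positivity
  have h : 0 < ∫ u in Ioi (0:ℝ), u ^ (l - 1) * Real.exp (-(ω/2) * (u + 1/u)) := by
    rw [setIntegral_pos_iff_support_of_nonneg_ae hnn (besselK_integrable l ω hω)]
    have hsub : Ioi (0:ℝ) ⊆ Function.support
        (fun u : ℝ => u ^ (l - 1) * Real.exp (-(ω/2) * (u + 1/u))) ∩ Ioi 0 := by
      intro u hu
      have hu0 : (0:ℝ) < u := hu
      refine ⟨?_, hu⟩
      simp only [Function.mem_support]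
      positivity
    calc (0:ENNReal) < volume (Ioi (0:ℝ)) := by simp [Real.volume_Ioi]
      _ ≤ _ := measure_mono hsub
  exact mul_pos (by norm_num) h

lemma gig_integral (l a b : ℝ) (ha : 0 < a) (hb : 0 < b) :
    ∫ u in Ioi (0:ℝ), u ^ (l - 1) * Real.exp (-(a * u + b / u) / 2)
      = 2 * (b/a) ^ (l/2) * besselK l (Real.sqrt (a*b)) := by
  set c := Real.sqrt (b/a) with hc
  have hc0 : 0 < c := Real.sqrt_pos.mpr (by positivity)
  set ω := Real.sqrt (a*b) with hω
  have hω0 : 0 < ω := Real.sqrt_pos.mpr (by positivity)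
  have hac : a * c = ω := by
    rw [hc, hω, ← Real.sqrt_sq ha.le, ← Real.sqrt_mul (sq_nonneg a)]
    congr 1
    field_simp
    rw [Real.sq_sqrt (sq_nonneg a)]
  have hbc : b / c = ω := by
    rw [div_eq_iff (ne_of_gt hc0), hc, hω, ← Real.sqrt_mul (by positivity)]
    rw [show a * b * (b/a) = b^2 by field_simp, Real.sqrt_sq hb.le]
  have key := MeasureTheory.integral_comp_mul_left_Ioi
    (fun u : ℝ => u ^ (l - 1) * Real.exp (-(a * u + b / u) / 2)) 0 hc0
  simp only [mul_zero, smul_eq_mul] at key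
  have hcongr : ∫ x in Ioi (0:ℝ),
      (c * x) ^ (l - 1) * Real.exp (-(a * (c * x) + b / (c * x)) / 2)
      = ∫ x in Ioi (0:ℝ), c ^ (l-1) * (x ^ (l - 1) * Real.exp (-(ω/2) * (x + 1/x))) := by
    refine setIntegral_congr_fun measurableSet_Ioi (fun x hx => ?_)
    have hx0 : (0:ℝ) < x := hx
    rw [Real.mul_rpow hc0.le hx0.le]
    have hexp : -(a * (c * x) + b / (c * x)) / 2 = -(ω/2) * (x + 1/x) := by
      have h1 : a * (c * x) = ω * x := by rw [← mul_assoc, hac]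
      have h2 : b / (c * x) = ω / x := by
        rw [div_mul_eq_div_div, hbc]
      rw [h1, h2]
      ring
    rw [hexp]
    ring
  have hIoi : (∫ u in Ioi (0:ℝ), u ^ (l - 1) * Real.exp (-(a * u + b / u) / 2))
      = c * ∫ x in Ioi (0:ℝ), (c * x) ^ (l - 1) * Real.exp (-(a * (c * x) + b / (c * x)) / 2) := by
    rw [key]
    rw [← mul_assoc, mul_inv_cancel₀ hc0.ne', one_mul]
  rw [hIoi, hcongr, MeasureTheory.integral_const_mul]
  have hbK : (∫ x in Ioi (0:ℝ), x ^ (l - 1) * Real.exp (-(ω/2) * (x + 1/x)))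
      = 2 * besselK l ω := by
    rw [besselK]; ring
  rw [hbK]
  have hcl : c * c ^ (l-1) = (b/a) ^ (l/2) := by
    rw [hc, Real.sqrt_eq_rpow, ← Real.rpow_mul (show (0:ℝ) ≤ b/a by positivity),
      ← Real.rpow_add (show (0:ℝ) < b/a by positivity)]
    congr 1
    ring
  rw [← mul_assoc, hcl]
  ring


theorem posterior_is_gig_mixture (φ μ : ℝ) (hφ : 0 < φ) (hμ : 0 < μ) (y : ℕ) :
    ∀ t ∈ Ioi (0:ℝ),
      Real.exp (-μ * t) * t ^ y * bsDensity φ t /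
          (∫ u in Ioi (0:ℝ), Real.exp (-μ * u) * u ^ y * bsDensity φ u)
        = ((1/φ^2 / (2*μ + 1/φ^2)) ^ (((y:ℝ) + 1/2)/2) *
              besselK ((y:ℝ) + 1/2) (Real.sqrt ((2*μ + 1/φ^2) * (1/φ^2))) /
              ((1/φ^2 / (2*μ + 1/φ^2)) ^ (((y:ℝ) + 1/2)/2) *
                besselK ((y:ℝ) + 1/2) (Real.sqrt ((2*μ + 1/φ^2) * (1/φ^2)))
               + (1/φ^2 / (2*μ + 1/φ^2)) ^ (((y:ℝ) - 1/2)/2) *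
                besselK ((y:ℝ) - 1/2) (Real.sqrt ((2*μ + 1/φ^2) * (1/φ^2))))) *
            gigDensity (2*μ + 1/φ^2) (1/φ^2) ((y:ℝ) + 1/2) t
          + ((1/φ^2 / (2*μ + 1/φ^2)) ^ (((y:ℝ) - 1/2)/2) *
              besselK ((y:ℝ) - 1/2) (Real.sqrt ((2*μ + 1/φ^2) * (1/φ^2))) /
              ((1/φ^2 / (2*μ + 1/φ^2)) ^ (((y:ℝ) + 1/2)/2) *
                besselK ((y:ℝ) + 1/2) (Real.sqrt ((2*μ + 1/φ^2) * (1/φ^2)))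
               + (1/φ^2 / (2*μ + 1/φ^2)) ^ (((y:ℝ) - 1/2)/2) *
                besselK ((y:ℝ) - 1/2) (Real.sqrt ((2*μ + 1/φ^2) * (1/φ^2))))) *
            gigDensity (2*μ + 1/φ^2) (1/φ^2) ((y:ℝ) - 1/2) t := by
  intro t ht
  have ht0 : (0:ℝ) < t := ht
  set A : ℝ := 2*μ + 1/φ^2 with hA
  set B : ℝ := 1/φ^2 with hB
  have hA0 : 0 < A := by rw [hA]; positivity
  have hB0 : 0 < B := by rw [hB]; positivity
  set ω : ℝ := Real.sqrt (A*B) with hω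
  have hω0 : 0 < ω := Real.sqrt_pos.mpr (by positivity)
  set α₁ : ℝ := (y:ℝ) + 1/2 with hα₁
  set α₂ : ℝ := (y:ℝ) - 1/2 with hα₂
  set r : ℝ := B / A with hr
  have hr0 : 0 < r := by positivity
  set K₁ : ℝ := besselK α₁ ω with hK₁
  set K₂ : ℝ := besselK α₂ ω with hK₂
  have hK₁0 : 0 < K₁ := besselK_pos _ _ hω0
  have hK₂0 : 0 < K₂ := besselK_pos _ _ hω0
  set s₁ : ℝ := r ^ (α₁/2) with hs₁
  set s₂ : ℝ := r ^ (α₂/2) with hs₂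
  have hs₁0 : 0 < s₁ := Real.rpow_pos_of_pos hr0 _
  have hs₂0 : 0 < s₂ := Real.rpow_pos_of_pos hr0 _
  set E : ℝ := Real.exp (1/φ^2) / (2 * Real.sqrt (2*π) * φ) with hE
  have hE0 : 0 < E := by
    rw [hE]
    have : (0:ℝ) < Real.sqrt (2*π) := Real.sqrt_pos.mpr (by positivity)
    positivity
  -- pointwise identity
  have hpt : ∀ u ∈ Ioi (0:ℝ), Real.exp (-μ*u) * u^y * bsDensity φ u
      = E * (u ^ (α₁ - 1) * Real.exp (-(A*u + B/u)/2)
             + u ^ (α₂ - 1) * Real.exp (-(A*u + B/u)/2)) := by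
    intro u hu
    have hu0 : (0:ℝ) < u := hu
    have hexp : Real.exp (-μ*u) * Real.exp (-(u + 1/u - 2)/(2*φ^2))
        = Real.exp (1/φ^2) * Real.exp (-(A*u + B/u)/2) := by
      rw [← Real.exp_add, ← Real.exp_add]
      congr 1
      rw [hA, hB]
      field_simp
      ring
    have hpow1 : (u:ℝ)^y * u ^ (-(1:ℝ)/2) = u ^ (α₁ - 1) := by
      rw [← Real.rpow_natCast u y, ← Real.rpow_add hu0]
      congr 1
      rw [hα₁]; ring
    have hpow2 : (u:ℝ)^y * u ^ (-(3:ℝ)/2) = u ^ (α₂ - 1) := by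
      rw [← Real.rpow_natCast u y, ← Real.rpow_add hu0]
      congr 1
      rw [hα₂]; ring
    rw [bsDensity]
    rw [show Real.exp (-μ*u) * u^y *
        ((u ^ (-(1:ℝ)/2) + u ^ (-(3:ℝ)/2)) / (2 * Real.sqrt (2*π) * φ) *
          Real.exp (-(u + 1/u - 2) / (2*φ^2)))
      = ((u:ℝ)^y * u ^ (-(1:ℝ)/2) + (u:ℝ)^y * u ^ (-(3:ℝ)/2)) *
          (Real.exp (-μ*u) * Real.exp (-(u + 1/u - 2)/(2*φ^2)))
          / (2 * Real.sqrt (2*π) * φ) from by ring]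
    rw [hpow1, hpow2, hexp, hE]
    ring
  -- denominator value
  have hD : (∫ u in Ioi (0:ℝ), Real.exp (-μ*u) * u^y * bsDensity φ u)
      = E * (2 * s₁ * K₁ + 2 * s₂ * K₂) := by
    rw [setIntegral_congr_fun measurableSet_Ioi hpt]
    rw [show (fun u : ℝ => E * (u ^ (α₁ - 1) * Real.exp (-(A*u + B/u)/2)
             + u ^ (α₂ - 1) * Real.exp (-(A*u + B/u)/2)))
      = (fun u : ℝ => E * (u ^ (α₁ - 1) * Real.exp (-(A*u + B/u)/2)
             + u ^ (α₂ - 1) * Real.exp (-(A*u + B/u)/2))) from rfl]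
    rw [MeasureTheory.integral_const_mul]
    rw [MeasureTheory.integral_add (gig_integrable α₁ A B hA0 hB0)
      (gig_integrable α₂ A B hA0 hB0)]
    rw [gig_integral α₁ A B hA0 hB0, gig_integral α₂ A B hA0 hB0]
  -- inverse identities
  have hinv1 : (A/B) ^ (α₁/2) = s₁⁻¹ := by
    rw [hs₁, show A/B = r⁻¹ from by rw [hr]; field_simp, Real.inv_rpow hr0.le]
  have hinv2 : (A/B) ^ (α₂/2) = s₂⁻¹ := by
    rw [hs₂, show A/B = r⁻¹ from by rw [hr]; field_simp, Real.inv_rpow hr0.le]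
  rw [hpt t ht, hD, gigDensity, gigDensity, hinv1, hinv2, ← hω, ← hK₁, ← hK₂]
  have hExp : (0:ℝ) < Real.exp (-(A*t + B/t)/2) := Real.exp_pos _
  field_simp
end
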